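/- Let N be a finite cyclic group of order m, M ≤ N, p a prime, and r an integer with r^p ≡ 1 (mod m) and gcd(r−1, m) = 1. For u ∈ N with u ∉ M, the set {u, u^r, u^{r^2}, ..., u^{r^{p-1}}} meets exactly p distinct cosets of M, and does not meet M itself. -/

import Mathlib

open scoped Classical

/-- In a cyclic group `N` of order `m`, with `p` prime, `r^p ≡ 1 (mod m)` and
`gcd(r - 1, m) = 1`: for `u ∉ M`, the set `{u, u^r, …, u^(r^(p-1))}` meets
exactly `p` distinct cosets of `M`, and does not meet `M` itself. -/
theorem orbit_meets_p_cosets (N : Type*) [Group N] [Fintype N] (hN : IsCyclic N)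
    (m : ℕ) (hm : Fintype.card N = m) (M : Subgroup N) (u : N) (hu : u ∉ M)
    (p : ℕ) (hp : p.Prime) (r : ℤ)
    (hr : r ^ p ≡ 1 [ZMOD m]) (hcop : Int.gcd (r - 1) (m : ℤ) = 1) :
    (Finset.image (fun i : ℕ => (QuotientGroup.mk (u ^ (r ^ i)) : N ⧸ M))
        (Finset.range p)).card = p ∧
      ∀ i < p, u ^ (r ^ i) ∉ M := by
  classical
  letI : CommGroup N := @IsCyclic.commGroup N _ hN
  haveI : M.Normal := M.normal_of_comm
  set z : N ⧸ M := QuotientGroup.mk u with hzdef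
  have hz1 : z ≠ 1 := by
    simpa [hzdef, QuotientGroup.eq_one_iff] using hu
  set k := orderOf z with hkdef
  have hzm : z ^ m = 1 := by
    have h1 : u ^ m = 1 := by rw [← hm]; exact pow_card_eq_one
    rw [hzdef, ← QuotientGroup.mk_pow, h1, QuotientGroup.mk_one]
  have hkm : k ∣ m := orderOf_dvd_of_pow_eq_one hzm
  have hk1 : k ≠ 1 := fun h => hz1 (orderOf_eq_one_iff.mp h)
  have hm0 : m ≠ 0 := by rw [← hm]; exact Fintype.card_ne_zero
  have hk0 : k ≠ 0 := fun h => hm0 (Nat.eq_zero_of_zero_dvd (h ▸ hkm))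
  have hklt : 1 < k := by omega
  haveI : Fact (1 < k) := ⟨hklt⟩
  -- R := r in ZMod k
  have hdvd1 : (k : ℤ) ∣ r ^ p - 1 := by
    refine dvd_trans (Int.natCast_dvd_natCast.mpr hkm) ?_
    exact Int.ModEq.dvd hr.symm
  have hRp : (r : ZMod k) ^ p = 1 := by
    have := (ZMod.intCast_zmod_eq_zero_iff_dvd (r ^ p - 1) k).mpr hdvd1
    push_cast at this
    linear_combination this
  have hp0 : p ≠ 0 := hp.ne_zero
  -- the key dvd fact from cosets
  have hmk : ∀ c : ℤ, (QuotientGroup.mk (u ^ c) : N ⧸ M) = z ^ c := by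
    intro c; rw [hzdef, QuotientGroup.mk_zpow]
  -- Part 2
  have part2 : ∀ i < p, u ^ (r ^ i) ∉ M := by
    intro i _ hmem
    have h1 : z ^ (r ^ i : ℤ) = 1 := by
      rw [← hmk]; exact (QuotientGroup.eq_one_iff _).mpr hmem
    have h2 : (k : ℤ) ∣ r ^ i := orderOf_dvd_iff_zpow_eq_one.mpr h1
    have h3 : (r : ZMod k) ^ i = 0 := by
      have := (ZMod.intCast_zmod_eq_zero_iff_dvd (r ^ i) k).mpr h2
      push_cast at this; exact this
    have : (1 : ZMod k) = 0 := by
      calc (1 : ZMod k) = ((r : ZMod k) ^ p) ^ i := by rw [hRp, one_pow]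
        _ = ((r : ZMod k) ^ i) ^ p := by rw [← pow_mul, mul_comm, pow_mul]
        _ = 0 := by rw [h3, zero_pow hp0]
    exact one_ne_zero this
  refine ⟨?_, part2⟩
  rw [Finset.card_image_of_injOn, Finset.card_range]
  -- injectivity
  have key : ∀ i j, i ≤ j → j < p →
      (QuotientGroup.mk (u ^ (r ^ i)) : N ⧸ M) = QuotientGroup.mk (u ^ (r ^ j)) → i = j := by
    intro i j hij hjp heq
    by_contra hne
    have hd0 : 0 < j - i := by omega
    have hdlt : j - i < p := by omega
    rw [hmk, hmk] at heq
    have h1 : z ^ (r ^ j - r ^ i) = 1 := by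
      rw [zpow_sub, heq, mul_inv_cancel]
    have h2 : (k : ℤ) ∣ r ^ j - r ^ i := orderOf_dvd_iff_zpow_eq_one.mpr h1
    have h3 : (r : ZMod k) ^ j = (r : ZMod k) ^ i := by
      have := (ZMod.intCast_zmod_eq_zero_iff_dvd (r ^ j - r ^ i) k).mpr h2
      push_cast at this
      linear_combination this
    have hRu : IsUnit (r : ZMod k) := by
      refine IsUnit.of_mul_eq_one ((r : ZMod k) ^ (p - 1)) ?_
      rw [← pow_succ']
      rw [Nat.sub_add_cancel hp.one_lt.le, hRp]
    have h4 : (r : ZMod k) ^ (j - i) = 1 := by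
      have hiu : IsUnit ((r : ZMod k) ^ i) := hRu.pow i
      have : (r : ZMod k) ^ i * (r : ZMod k) ^ (j - i) = (r : ZMod k) ^ i * 1 := by
        rw [mul_one, ← pow_add, Nat.add_sub_cancel' hij, h3]
      exact hiu.mul_left_cancel this
    have hord : orderOf (r : ZMod k) ∣ Nat.gcd p (j - i) :=
      Nat.dvd_gcd (orderOf_dvd_of_pow_eq_one hRp) (orderOf_dvd_of_pow_eq_one h4)
    have hcopd : Nat.gcd p (j - i) = 1 :=
      (hp.coprime_iff_not_dvd.mpr (Nat.not_dvd_of_pos_of_lt hd0 hdlt))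
    rw [hcopd, Nat.dvd_one, orderOf_eq_one_iff] at hord
    have hkr1 : (k : ℤ) ∣ r - 1 := by
      have : ((r - 1 : ℤ) : ZMod k) = 0 := by push_cast; rw [hord]; ring
      exact (ZMod.intCast_zmod_eq_zero_iff_dvd _ k).mp this
    have hkg : k ∣ Int.gcd (r - 1) (m : ℤ) := by
      refine Nat.dvd_gcd ?_ ?_
      · rw [← Int.natAbs_natCast k]
        exact Int.natAbs_dvd_natAbs.mpr hkr1
      · simpa using hkm
    rw [hcop, Nat.dvd_one] at hkg
    exact hk1 hkg
  intro i hi j hj heq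
  simp only [Finset.coe_range, Set.mem_Iio] at hi hj
  rcases le_total i j with h | h
  · exact key i j h hj heq
  · exact (key j i h hi heq.symm).symm
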